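/- Let M be a complete metric space, p ≠ q ∈ M, and f_{pq}(x) = (d(p,q)/2)·(d(x,q) − d(x,p))/(d(x,q) + d(x,p)) + C with C chosen so f_{pq}(0) = 0. If u ≠ v ∈ M and ε ≥ 0 satisfy (f_{pq}(u) − f_{pq}(v))/d(u,v) ≥ 1 − ε, then u,v ∈ [p,q]_ε := {x ∈ M : d(p,x) + d(x,q) ≤ d(p,q)/(1−ε)}. In particular, f_{pq} is 1-Lipschitz, (f_{pq}(p) − f_{pq}(q))/d(p,q) = 1, and if (f_{pq}(u)−f_{pq}(v))/d(u,v) = 1 then u,v lie in the metric segment [p,q] = {x : d(p,x)+d(x,q) = d(p,q)}. -/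

import Mathlib

open Metric Set

/-- Properties of the function
`f_{pq}(x) = (d(p,q)/2)·(d(x,q) − d(x,p))/(d(x,q) + d(x,p)) + C`, normalized so that
`f_{pq}(0) = 0`. If `u ≠ v` and `0 ≤ ε < 1` satisfy `(f_{pq}(u) − f_{pq}(v))/d(u,v) ≥ 1 − ε`,
then `u, v ∈ [p,q]_ε = {x : d(p,x) + d(x,q) ≤ d(p,q)/(1−ε)}`. In particular `f_{pq}` is
`1`-Lipschitz, `(f_{pq}(p) − f_{pq}(q))/d(p,q) = 1`, and equality
`(f_{pq}(u) − f_{pq}(v))/d(u,v) = 1` forces `u, v ∈ [p,q]`. -/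
theorem fpq_properties {M : Type*} [MetricSpace M] [CompleteSpace M] (z p q : M) (hpq : p ≠ q)
    (g : M → ℝ)
    (hg : ∀ x, g x = (dist p q / 2) * ((dist x q - dist x p) / (dist x q + dist x p)))
    (fpq : M → ℝ) (hfpq : ∀ x, fpq x = g x - g z) :
    (∀ u v : M, u ≠ v → ∀ ε : ℝ, 0 ≤ ε → ε < 1 →
        (fpq u - fpq v) / dist u v ≥ 1 - ε →
        dist p u + dist u q ≤ dist p q / (1 - ε) ∧
        dist p v + dist v q ≤ dist p q / (1 - ε)) ∧
    (∀ x y : M, |fpq x - fpq y| ≤ dist x y) ∧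
    (fpq p - fpq q) / dist p q = 1 ∧
    (∀ u v : M, u ≠ v → (fpq u - fpq v) / dist u v = 1 →
        dist p u + dist u q = dist p q ∧ dist p v + dist v q = dist p q) := by
  have hD : 0 < dist p q := dist_pos.2 hpq
  have hS : ∀ x : M, dist p q ≤ dist x q + dist x p := by
    intro x
    calc dist p q ≤ dist p x + dist x q := dist_triangle p x q
    _ = dist x q + dist x p := by rw [dist_comm p x]; ring
  have hSpos : ∀ x : M, 0 < dist x q + dist x p := fun x => lt_of_lt_of_le hD (hS x)
  -- exact algebraic identity
  have keyF : ∀ u v : M, (g u - g v) * ((dist u q + dist u p) * (dist v q + dist v p)) =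
      dist p q * (dist v p * dist u q - dist u p * dist v q) := by
    intro u v
    rw [hg u, hg v]
    have hnu : dist u q + dist u p ≠ 0 := ne_of_gt (hSpos u)
    have hnv : dist v q + dist v p ≠ 0 := ne_of_gt (hSpos v)
    field_simp
    ring
  have tri : ∀ u v : M, dist v p * dist u q - dist u p * dist v q ≤
      (dist v q + dist v p) * dist u v := by
    intro u v
    have h1 : dist u q - dist v q ≤ dist u v := by
      have := dist_triangle u v q; linarith
    have h2 : dist v p - dist u p ≤ dist u v := by
      have := dist_triangle v u p; rw [dist_comm v u] at this; linarith
    nlinarith [dist_nonneg (x := v) (y := p), dist_nonneg (x := v) (y := q)]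
  have tri' : ∀ u v : M, dist v p * dist u q - dist u p * dist v q ≤
      (dist u q + dist u p) * dist u v := by
    intro u v
    have h1 : dist u q - dist v q ≤ dist u v := by
      have := dist_triangle u v q; linarith
    have h2 : dist v p - dist u p ≤ dist u v := by
      have := dist_triangle v u p; rw [dist_comm v u] at this; linarith
    nlinarith [dist_nonneg (x := u) (y := p), dist_nonneg (x := u) (y := q)]
  have key : ∀ u v : M, (g u - g v) * (dist u q + dist u p) ≤ dist p q * dist u v := by
    intro u v
    have hid := keyF u v
    have ht := tri u v
    have hsv := hSpos v
    nlinarith [mul_le_mul_of_nonneg_left ht hD.le]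
  have key' : ∀ u v : M, (g u - g v) * (dist v q + dist v p) ≤ dist p q * dist u v := by
    intro u v
    have hid := keyF u v
    have ht := tri' u v
    have hsu := hSpos u
    nlinarith [mul_le_mul_of_nonneg_left ht hD.le]
  have hlip : ∀ x y : M, |fpq x - fpq y| ≤ dist x y := by
    intro x y
    rw [hfpq, hfpq]
    have h1 : g x - g y ≤ dist x y := by
      have := key x y
      have h2 : dist p q * dist x y ≤ (dist x q + dist x p) * dist x y :=
        mul_le_mul_of_nonneg_right (hS x) dist_nonneg
      nlinarith [hSpos x]
    have h2 : g y - g x ≤ dist x y := by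
      have := key y x
      rw [dist_comm y x] at this
      have h2 : dist p q * dist x y ≤ (dist y q + dist y p) * dist x y :=
        mul_le_mul_of_nonneg_right (hS y) dist_nonneg
      nlinarith [hSpos y]
    rw [abs_sub_le_iff]
    constructor <;> linarith
  have main : ∀ u v : M, u ≠ v → ∀ ε : ℝ, 0 ≤ ε → ε < 1 →
      (fpq u - fpq v) / dist u v ≥ 1 - ε →
      dist p u + dist u q ≤ dist p q / (1 - ε) ∧
      dist p v + dist v q ≤ dist p q / (1 - ε) := by
    intro u v huv ε hε0 hε1 hge
    have hr : 0 < dist u v := dist_pos.2 huv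
    have h1ε : 0 < 1 - ε := by linarith
    have hgv : g u - g v ≥ (1 - ε) * dist u v := by
      rw [ge_iff_le, le_div_iff₀ hr] at hge
      rw [hfpq, hfpq] at hge
      linarith
    constructor
    · rw [le_div_iff₀ h1ε]
      have hku := key u v
      have : (1 - ε) * dist u v * (dist u q + dist u p) ≤ dist p q * dist u v :=
        le_trans (mul_le_mul_of_nonneg_right (by linarith) (hSpos u).le) hku
      rw [dist_comm p u]
      nlinarith
    · rw [le_div_iff₀ h1ε]
      have hkv := key' u v
      have : (1 - ε) * dist u v * (dist v q + dist v p) ≤ dist p q * dist u v :=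
        le_trans (mul_le_mul_of_nonneg_right (by linarith) (hSpos v).le) hkv
      rw [dist_comm p v]
      nlinarith
  refine ⟨main, hlip, ?_, ?_⟩
  · simp only [hfpq, hg]
    rw [dist_comm q p]
    simp only [dist_self]
    field_simp
    ring
  · intro u v huv heq
    have h := main u v huv 0 le_rfl one_pos (by rw [heq]; norm_num)
    rw [sub_zero, div_one] at h
    have t1 : dist p q ≤ dist p u + dist u q := dist_triangle p u q
    have t2 : dist p q ≤ dist p v + dist v q := dist_triangle p v q
    exact ⟨le_antisymm h.1 t1, le_antisymm h.2 t2⟩
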